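/- Let q be a prime power, F a finite field with q² elements, and δ a generator of F^×. Define R : ZMod (q²-1) × ZMod (q²-1) → ZMod (q²-1) × ZMod (q²-1) by R(i,j) = (k(i,j), l(i,j)) if i ≢ j (mod q-1), and R(i,j) = (i,j) otherwise, and let P be the flip P(i,j) = (j,i). Then Q = P ∘ R satisfies the quantum Yang–Baxter equation Q^{12} ∘ Q^{13} ∘ Q^{23} = Q^{23} ∘ Q^{13} ∘ Q^{12} as maps on ZMod (q²-1) × ZMod (q²-1) × ZMod (q²-1). -/

import Mathlib

/-- The canonical reduction ring homomorphism `ZMod (q²-1) → ZMod (q-1)`,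
which exists since `(q-1) ∣ (q²-1)`. -/
def red (q : ℕ) : ZMod (q ^ 2 - 1) →+* ZMod (q - 1) :=
  ZMod.castHom (by simpa using Nat.sub_dvd_pow_sub_pow q 1 2) (ZMod (q - 1))

/-- `xij q δ i j` is the element `x_{i,j}`, i.e. the unique `x ∈ ZMod (q²-1)` with
`δ^x = 1 + δ^{j-i}` in `F` (chosen by choice; when `δ` is a generator and
`i ≢ j (mod q-1)`, such an `x` exists and is unique). -/
noncomputable def xij (q : ℕ) {F : Type*} [Field F] (δ : Fˣ) (i j : ZMod (q ^ 2 - 1)) :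
    ZMod (q ^ 2 - 1) :=
  @Classical.epsilon _ ⟨0⟩ fun x : ZMod (q ^ 2 - 1) =>
    ((δ ^ x.val : Fˣ) : F) = 1 + ((δ ^ (j - i).val : Fˣ) : F)

/-- `y_{i,j} = x_{i,j} + i - j`. -/
noncomputable def yij (q : ℕ) {F : Type*} [Field F] (δ : Fˣ) (i j : ZMod (q ^ 2 - 1)) :
    ZMod (q ^ 2 - 1) :=
  xij q δ i j + i - j

/-- `k(i,j) = j - y_{i,j}·(q-1)`. -/
noncomputable def kij (q : ℕ) {F : Type*} [Field F] (δ : Fˣ) (i j : ZMod (q ^ 2 - 1)) :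
    ZMod (q ^ 2 - 1) :=
  j - yij q δ i j * ((q - 1 : ℕ) : ZMod (q ^ 2 - 1))

/-- `l(i,j) = i - x_{i,j}·(q-1)`. -/
noncomputable def lij (q : ℕ) {F : Type*} [Field F] (δ : Fˣ) (i j : ZMod (q ^ 2 - 1)) :
    ZMod (q ^ 2 - 1) :=
  i - xij q δ i j * ((q - 1 : ℕ) : ZMod (q ^ 2 - 1))

/-- The map `R(i,j) = (k(i,j), l(i,j))` if `i ≢ j (mod q-1)`, and `R(i,j) = (i,j)`
otherwise. -/
noncomputable def Rmap (q : ℕ) {F : Type*} [Field F] (δ : Fˣ)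
    (p : ZMod (q ^ 2 - 1) × ZMod (q ^ 2 - 1)) : ZMod (q ^ 2 - 1) × ZMod (q ^ 2 - 1) :=
  if red q p.1 ≠ red q p.2 then (kij q δ p.1 p.2, lij q δ p.1 p.2) else p

/-- For `S : X × X → X × X`, the map `S¹²` acting as `S` on coordinates 1 and 2
and as the identity on coordinate 3. -/
def act12 {X : Type*} (S : X × X → X × X) : X × X × X → X × X × X :=
  fun p => ((S (p.1, p.2.1)).1, (S (p.1, p.2.1)).2, p.2.2)

/-- `S²³` acts as `S` on coordinates 2 and 3. -/
def act23 {X : Type*} (S : X × X → X × X) : X × X × X → X × X × X :=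
  fun p => (p.1, (S (p.2.1, p.2.2)).1, (S (p.2.1, p.2.2)).2)

/-- `S¹³` acts as `S` on coordinates 1 and 3. -/
def act13 {X : Type*} (S : X × X → X × X) : X × X × X → X × X × X :=
  fun p => ((S (p.1, p.2.2)).1, p.2.1, (S (p.1, p.2.2)).2)


section Abstract

variable {K : Type*} [Field K] (T : K →+* K)

open Classical in
noncomputable def psi (s t : K) : K := if s = 0 then -t else s * T t / T s

lemma T_ne_zero {x : K} (hx : x ≠ 0) : T x ≠ 0 :=
  fun h => hx (T.injective (by simp [h]))

lemma psi_zero_left (t : K) : psi T 0 t = -t := if_pos rfl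

lemma psi_of_ne {s : K} (hs : s ≠ 0) (t : K) : psi T s t = s * T t / T s := if_neg hs

lemma psi_zero_right (s : K) : psi T s 0 = 0 := by
  unfold psi; split <;> simp

lemma psi_neg (s t : K) : psi T s (-t) = -psi T s t := by
  unfold psi; split <;> simp [neg_div]

lemma psi_self (s : K) : psi T s s = s := by
  unfold psi
  split
  · simp_all
  · rename_i hs
    rw [mul_div_assoc, div_self (T_ne_zero T hs), mul_one]

lemma T_psi (hT : ∀ x : K, T (T x) = x) {s : K} (hs : s ≠ 0) (t : K) :
    T (psi T s t) = T s * t / s := by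
  rw [psi_of_ne T hs, map_div₀, map_mul, hT, hT]

lemma psi_norm (hT : ∀ x : K, T (T x) = x) (s t : K) :
    psi T s t * T (psi T s t) = t * T t := by
  by_cases hs : s = 0
  · subst hs; rw [psi_zero_left, map_neg, neg_mul_neg]
  · rw [T_psi T hT hs, psi_of_ne T hs, div_mul_div_comm,
      div_eq_iff (mul_ne_zero (T_ne_zero T hs) hs)]
    ring

lemma psi_psi (hT : ∀ x : K, T (T x) = x) (s t : K) : psi T s (psi T s t) = t := by
  by_cases hs : s = 0
  · subst hs; rw [psi_zero_left, psi_zero_left, neg_neg]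
  · have h1 : T s ≠ 0 := T_ne_zero T hs
    rw [psi_of_ne T hs (psi T s t), T_psi T hT hs]
    field_simp

lemma psi_congr {a b : K} (ha : a ≠ 0) (hb : b ≠ 0) (h : a * T b = b * T a) (t : K) :
    psi T a t = psi T b t := by
  rw [psi_of_ne T ha, psi_of_ne T hb, div_eq_div_iff (T_ne_zero T ha) (T_ne_zero T hb)]
  ring_nf
  linear_combination T t * h

lemma ybe_core (hT : ∀ x : K, T (T x) = x) (u v w s1 t2 t3 a1 a2 a3 : K)
    (hs1 : s1 = v + w) (ha1 : a1 = u + v)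
    (ht2 : t2 = u + psi T s1 w) (ha2 : a2 = psi T a1 u + w)
    (ht3 : t3 = psi T t2 u + psi T s1 v) (ha3 : a3 = psi T a1 v + psi T a2 w) :
    psi T t3 (psi T t2 u) = psi T a2 (psi T a1 u) ∧
    psi T t3 (psi T s1 v) = psi T a3 (psi T a1 v) ∧
    psi T t2 (psi T s1 w) = psi T a3 (psi T a2 w) := by
  by_cases hz1 : s1 = 0
  · -- Case A : v = -w
    have hvw : v = -w := eq_neg_of_add_eq_zero_left (by rw [← hs1, hz1])
    have ht2' : t2 = a1 := by rw [ht2, ha1, hz1, psi_zero_left, hvw]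
    have ht3' : t3 = a2 := by rw [ht3, ha2, hz1, psi_zero_left, ht2', hvw, neg_neg]
    have hnP : psi T a1 w * T (psi T a1 w) = w * T w := psi_norm T hT _ _
    have hnR : psi T a2 w * T (psi T a2 w) = w * T w := psi_norm T hT _ _
    have ha3' : a3 = psi T a2 w - psi T a1 w := by
      rw [ha3, hvw, psi_neg]; ring
    refine ⟨by rw [ht2', ht3'], ?_, ?_⟩
    · -- G2
      rw [ht3', hz1, psi_zero_left, hvw, neg_neg, psi_neg, psi_neg]
      by_cases hz3 : a3 = 0
      · have hRP : psi T a2 w = psi T a1 w :=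
          sub_eq_zero.mp (by rw [← ha3', hz3])
        rw [hz3, psi_zero_left, neg_neg, hRP]
      · rw [psi_of_ne T hz3, ha3', map_sub]
        have hTRP : T (psi T a2 w) - T (psi T a1 w) ≠ 0 := by
          rw [← map_sub, ← ha3']; exact T_ne_zero T hz3
        field_simp
        linear_combination hnR - hnP
    · -- G3
      rw [ht2', hz1, psi_zero_left, psi_neg]
      by_cases hz3 : a3 = 0
      · have hRP : psi T a2 w = psi T a1 w :=
          sub_eq_zero.mp (by rw [← ha3', hz3])
        rw [hz3, psi_zero_left, hRP]
      · rw [psi_of_ne T hz3, ha3', map_sub]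
        have hTRP : T (psi T a2 w) - T (psi T a1 w) ≠ 0 := by
          rw [← map_sub, ← ha3']; exact T_ne_zero T hz3
        field_simp
        linear_combination hnP - hnR
  · by_cases hb1 : a1 = 0
    · -- Case B : v = -u
      have hvu : v = -u := eq_neg_of_add_eq_zero_right (by rw [← ha1, hb1])
      have ha2' : a2 = s1 := by rw [ha2, hb1, psi_zero_left, hs1, hvu]
      have ha3' : a3 = t2 := by rw [ha3, hb1, psi_zero_left, ha2', ht2, hvu, neg_neg]
      have hnP : psi T s1 u * T (psi T s1 u) = u * T u := psi_norm T hT _ _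
      have hnR : psi T t2 u * T (psi T t2 u) = u * T u := psi_norm T hT _ _
      have ht3' : t3 = psi T t2 u - psi T s1 u := by
        rw [ht3, hvu, psi_neg]; ring
      refine ⟨?_, ?_, by rw [ha2', ha3']⟩
      · -- G1
        rw [ha2', hb1, psi_zero_left, psi_neg]
        by_cases hz3 : t3 = 0
        · have hRP : psi T t2 u = psi T s1 u :=
            sub_eq_zero.mp (by rw [← ht3', hz3])
          rw [hz3, psi_zero_left, hRP]
        · rw [psi_of_ne T hz3, ht3', map_sub]
          have hTRP : T (psi T t2 u) - T (psi T s1 u) ≠ 0 := by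
            rw [← map_sub, ← ht3']; exact T_ne_zero T hz3
          field_simp
          linear_combination hnR - hnP
      · -- G2
        rw [hvu, psi_neg, psi_neg, hb1, psi_zero_left, neg_neg, ha3']
        by_cases hz3 : t3 = 0
        · have hRP : psi T t2 u = psi T s1 u :=
            sub_eq_zero.mp (by rw [← ht3', hz3])
          rw [hz3, psi_zero_left, neg_neg, hRP]
        · rw [psi_of_ne T hz3, ht3', map_sub]
          have hTRP : T (psi T t2 u) - T (psi T s1 u) ≠ 0 := by
            rw [← map_sub, ← ht3']; exact T_ne_zero T hz3
          field_simp
          linear_combination hnP - hnR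
    · -- Case C : s1 ≠ 0, a1 ≠ 0
      have hvw0 : v + w ≠ 0 := hs1 ▸ hz1
      have huv0 : u + v ≠ 0 := ha1 ▸ hb1
      have hTs1 : T s1 = T v + T w := by rw [hs1, map_add]
      have hTa1 : T a1 = T u + T v := by rw [ha1, map_add]
      have hTs1n : T s1 ≠ 0 := T_ne_zero T hz1
      have hTa1n : T a1 ≠ 0 := T_ne_zero T hb1
      have hTvw : T v + T w ≠ 0 := hTs1 ▸ hTs1n
      have hTuv : T u + T v ≠ 0 := hTa1 ▸ hTa1n
      have hTt2d : T t2 = T u + T s1 * w / s1 := by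
        rw [ht2, map_add, T_psi T hT hz1]
      have hTa2d : T a2 = T a1 * u / a1 + T w := by
        rw [ha2, map_add, T_psi T hT hb1]
      have hZ0 : t2 * T u * T s1 + s1 * T v * T t2 = T s1 * T a1 * a2 := by
        rw [hTt2d, ht2, ha2, psi_of_ne T hz1, psi_of_ne T hb1, hTs1, hTa1, hs1, ha1]
        field_simp
        ring
      have hZ0' : a2 * T w * T a1 + a1 * T v * T a2 = T a1 * T s1 * t2 := by
        rw [hTa2d, ht2, ha2, psi_of_ne T hz1, psi_of_ne T hb1, hTs1, hTa1, hs1, ha1]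
        field_simp
        ring
      by_cases hz2 : t2 = 0
      · -- Case C-ii : t2 = 0, hence a2 = 0
        have hTt2z : T t2 = 0 := by rw [hz2, map_zero]
        have ha2z : a2 = 0 := by
          have h : T s1 * T a1 * a2 = 0 := by rw [← hZ0, hTt2z, hz2]; ring
          exact (mul_eq_zero.mp h).resolve_left (mul_ne_zero hTs1n hTa1n)
        have c1 : u * T s1 = -(s1 * T w) := by
          have h : u + s1 * T w / T s1 = 0 := by rw [← psi_of_ne T hz1, ← ht2, hz2]
          field_simp [hTs1n] at h
          linear_combination h
        have c2 : w * T a1 = -(a1 * T u) := by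
          have h : a1 * T u / T a1 + w = 0 := by rw [← psi_of_ne T hb1, ← ha2, ha2z]
          field_simp [hTa1n] at h
          linear_combination h
        by_cases hu : u = 0
        · have hw : w = 0 := by
            have h : s1 * T w = 0 := by
              rw [hu, zero_mul] at c1; linear_combination c1
            exact T.injective (by
              simpa using (mul_eq_zero.mp h).resolve_left hz1)
          have hs1v : s1 = v := by rw [hs1, hw, add_zero]
          have ha1v : a1 = v := by rw [ha1, hu, zero_add]
          have ht3v : t3 = v := by
            rw [ht3, hu, psi_zero_right, hs1v, psi_self, zero_add]
          have ha3v : a3 = v := by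
            rw [ha3, ha1v, psi_self, hw, psi_zero_right, add_zero]
          refine ⟨?_, ?_, ?_⟩
          · rw [hu, psi_zero_right, psi_zero_right, psi_zero_right, psi_zero_right]
          · rw [ht3v, hs1v, ha3v, ha1v]
          · rw [hw, psi_zero_right, psi_zero_right, psi_zero_right, psi_zero_right]
        · have hw : w ≠ 0 := by
            intro h0
            have h : a1 * T u = 0 := by rw [h0, zero_mul] at c2; linear_combination c2
            exact (mul_ne_zero hb1 (T_ne_zero T hu)) h
          have Tc1 : T u * s1 = -(T s1 * w) := by
            have h := congrArg T c1
            simpa [map_mul, map_neg, hT] using h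
          have Tc2 : T w * a1 = -(T a1 * u) := by
            have h := congrArg T c2
            simpa [map_mul, map_neg, hT] using h
          have key : s1 * T a1 = a1 * T s1 := by
            rw [ha1, map_add] at c2 Tc2
            rw [hs1, ha1, map_add, map_add]
            linear_combination c2 - Tc2
          have ht3s : t3 = s1 := by
            rw [ht3, hz2, psi_zero_left, psi_of_ne T hz1]
            field_simp [hTs1n]
            linear_combination - c1 - s1 * hTs1
          have ha3a : a3 = a1 := by
            rw [ha3, ha2z, psi_zero_left, psi_of_ne T hb1]
            field_simp [hTa1n]
            linear_combination - c2 - a1 * hTa1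
          refine ⟨?_, ?_, ?_⟩
          · rw [hz2, ha2z, psi_zero_left, psi_zero_left, ht3s, psi_neg,
              psi_congr T hz1 hb1 key u]
          · rw [ht3s, ha3a, psi_psi T hT, psi_psi T hT]
          · rw [hz2, ha2z, ha3a, psi_zero_left, psi_zero_left, psi_neg,
              psi_congr T hz1 hb1 key w]
      · -- Case C-i : everything nonzero
        have hTt2n : T t2 ≠ 0 := T_ne_zero T hz2
        have hZ : t3 * T t2 * T s1 = T s1 * T a1 * a2 := by
          rw [ht3, psi_of_ne T hz2, psi_of_ne T hz1, ← hZ0]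
          field_simp
        have hZc : t3 * T t2 = T a1 * a2 :=
          mul_right_cancel₀ hTs1n (by linear_combination hZ)
        have ha2n : a2 ≠ 0 := by
          intro h0
          exact hz2 (by
            have h : T a1 * T s1 * t2 = 0 := by rw [← hZ0', h0]; simp
            exact (mul_eq_zero.mp h).resolve_left (mul_ne_zero hTa1n hTs1n))
        have hTa2n : T a2 ≠ 0 := T_ne_zero T ha2n
        have hZ' : a3 * T a2 * T a1 = T a1 * T s1 * t2 := by
          rw [ha3, psi_of_ne T hb1, psi_of_ne T ha2n, ← hZ0']
          field_simp
          ring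
        have hZc' : a3 * T a2 = T s1 * t2 :=
          mul_right_cancel₀ hTa1n (by linear_combination hZ')
        have ht3n : t3 ≠ 0 := by
          intro h
          rw [h, zero_mul] at hZc
          exact (mul_ne_zero hTa1n ha2n) hZc.symm
        have ha3n : a3 ≠ 0 := by
          intro h
          rw [h, zero_mul] at hZc'
          exact (mul_ne_zero hTs1n hz2) hZc'.symm
        have hTt3c : T t3 * t2 = a1 * T a2 := by
          have h := congrArg T hZc
          simpa [map_mul, hT] using h
        have hTa3c : T a3 * a2 = s1 * T t2 := by
          have h := congrArg T hZc'
          simpa [map_mul, hT] using h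
        have h5 : t3 * T a3 = T a1 * s1 :=
          mul_right_cancel₀ ha2n (by linear_combination t3 * hTa3c + s1 * hZc)
        have h6 : T t3 * a3 = a1 * T s1 :=
          mul_right_cancel₀ hTa2n (by linear_combination T t3 * hZc' + T s1 * hTt3c)
        have hTt3n : T t3 ≠ 0 := T_ne_zero T ht3n
        have hTa3n : T a3 ≠ 0 := T_ne_zero T ha3n
        refine ⟨?_, ?_, ?_⟩
        · rw [psi_of_ne T ht3n, psi_of_ne T ha2n, T_psi T hT hz2, T_psi T hT hb1]
          field_simp
          linear_combination (u * a1 * T a2) * hZc - (u * a2 * T a1) * hTt3c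
        · rw [psi_of_ne T ht3n, psi_of_ne T ha3n, T_psi T hT hz1, T_psi T hT hb1]
          field_simp
          linear_combination (v * a1 * T s1) * h5 - (v * s1 * T a1) * h6
        · rw [psi_of_ne T hz2, psi_of_ne T ha3n, T_psi T hT hz1, T_psi T hT ha2n]
          field_simp
          linear_combination (w * t2 * T s1) * hTa3c - (w * s1 * T t2) * hZc'

end Abstract


section AbstractYBE

variable {K : Type*} [Field K] (T : K →+* K)

/-- The abstract form of the map `P ∘ R` on `K × K`. -/
noncomputable def Qpsi : K × K → K × K :=
  fun p => (psi T (p.1 + p.2) p.1, psi T (p.1 + p.2) p.2)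

lemma ybe_psi (hT : ∀ x : K, T (T x) = x) (x : K × K × K) :
    act12 (Qpsi T) (act13 (Qpsi T) (act23 (Qpsi T) x)) =
      act23 (Qpsi T) (act13 (Qpsi T) (act12 (Qpsi T) x)) := by
  obtain ⟨u, v, w⟩ := x
  obtain ⟨G1, G2, G3⟩ := ybe_core T hT u v w _ _ _ _ _ _ rfl rfl rfl rfl rfl rfl
  simp only [act12, act13, act23, Qpsi]
  exact Prod.ext G1 (Prod.ext G2 G3)

end AbstractYBE

theorem stmt10 (q : ℕ) (hq : IsPrimePow q) (F : Type*) [Field F] [Fintype F]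
    (hF : Fintype.card F = q ^ 2) (δ : Fˣ) (hδ : Subgroup.zpowers δ = ⊤) :
    act12 (Prod.swap ∘ Rmap q δ) ∘ act13 (Prod.swap ∘ Rmap q δ) ∘
        act23 (Prod.swap ∘ Rmap q δ) =
      act23 (Prod.swap ∘ Rmap q δ) ∘ act13 (Prod.swap ∘ Rmap q δ) ∘
        act12 (Prod.swap ∘ Rmap q δ) := by
  classical
  have h2 : 2 ≤ q := hq.two_le
  obtain ⟨p, k, hp, hk, hpk⟩ := hq
  have hq4 : 4 ≤ q ^ 2 := by nlinarith
  haveI : NeZero (q ^ 2 - 1) := ⟨by omega⟩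
  haveI : NeZero (q - 1) := ⟨by omega⟩
  have hN : Fintype.card Fˣ = q ^ 2 - 1 := by rw [Fintype.card_units, hF]
  have horder : orderOf δ = q ^ 2 - 1 := by
    rw [orderOf_eq_card_of_forall_mem_zpowers (fun x => hδ ▸ Subgroup.mem_top x),
      Nat.card_eq_fintype_card, hN]
  haveI := ringChar.charP F
  haveI hcharP : CharP F p := by
    have h1 : Nat.Prime (ringChar F) := CharP.char_is_prime F (ringChar F)
    obtain ⟨n, -, hcard⟩ := FiniteField.card F (ringChar F)
    have hdvd : ringChar F ∣ p ^ (k * 2) := by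
      have hq2' : p ^ (k * 2) = q ^ 2 := by rw [pow_mul, hpk]
      rw [hq2', ← hF, hcard]
      exact dvd_pow_self _ n.ne_zero
    have heq : ringChar F = p :=
      (Nat.prime_dvd_prime_iff_eq h1 hp.nat_prime).mp (h1.dvd_of_dvd_pow hdvd)
    exact heq ▸ ringChar.charP F
  haveI : Fact (Nat.Prime p) := ⟨hp.nat_prime⟩
  let T : F →+* F :=
    { toFun := fun x => x ^ q
      map_one' := one_pow q
      map_mul' := fun x y => mul_pow x y q
      map_zero' := zero_pow (by omega)
      map_add' := fun x y => by
        show (x + y) ^ q = x ^ q + y ^ q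
        rw [← hpk]; exact add_pow_char_pow x y p k }
  have hTdef : ∀ z : F, T z = z ^ q := fun _ => rfl
  have hT : ∀ z : F, T (T z) = z := fun z => by
    show (z ^ q) ^ q = z
    rw [← pow_mul, show q * q = q ^ 2 by ring, ← hF]
    exact FiniteField.pow_card z
  have hE_add : ∀ i j : ZMod (q ^ 2 - 1), δ ^ (i + j).val = δ ^ i.val * δ ^ j.val := by
    intro i j
    rw [← pow_add]
    exact pow_eq_pow_iff_modEq.mpr (by rw [horder, ZMod.val_add]; exact Nat.mod_modEq _ _)
  have hEsub : ∀ i j : ZMod (q ^ 2 - 1),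
      (δ ^ (i - j).val : Fˣ) = δ ^ i.val * (δ ^ j.val)⁻¹ := by
    intro i j
    refine eq_mul_inv_of_mul_eq ?_
    rw [← hE_add, sub_add_cancel]
  have hq1v : ((q - 1 : ℕ) : ZMod (q ^ 2 - 1)).val = q - 1 := by
    refine ZMod.val_cast_of_lt ?_
    have : q < q ^ 2 := by nlinarith
    omega
  have hE_mul : ∀ x : ZMod (q ^ 2 - 1),
      δ ^ (x * ((q - 1 : ℕ) : ZMod (q ^ 2 - 1))).val = (δ ^ x.val) ^ (q - 1) := by
    intro x
    rw [← pow_mul]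
    refine pow_eq_pow_iff_modEq.mpr ?_
    rw [horder, ZMod.val_mul, hq1v]
    exact Nat.mod_modEq _ _
  have hEinj : Function.Injective (fun i : ZMod (q ^ 2 - 1) => δ ^ i.val) := by
    intro i j h
    have h1 := pow_eq_pow_iff_modEq.mp h
    rw [horder] at h1
    exact ZMod.val_injective _ (h1.eq_of_lt_of_lt (ZMod.val_lt i) (ZMod.val_lt j))
  have hEbij : Function.Bijective (fun i : ZMod (q ^ 2 - 1) => δ ^ i.val) :=
    (Fintype.bijective_iff_injective_and_card _).mpr ⟨hEinj, by rw [ZMod.card, hN]⟩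
  have hq21 : (q - 1) * (q + 1) = q ^ 2 - 1 := by
    rcases Nat.exists_eq_add_of_le h2 with ⟨r, rfl⟩
    have h1' : (2 + r - 1) * (2 + r + 1) = r ^ 2 + 4 * r + 3 := by
      have hh : 2 + r - 1 = r + 1 := by omega
      rw [hh]; ring
    have h2' : (2 + r) ^ 2 = r ^ 2 + 4 * r + 4 := by ring
    omega
  have hpow : ∀ d : ZMod (q ^ 2 - 1),
      (δ ^ d.val : Fˣ) ^ (q + 1) = 1 ↔ (q - 1) ∣ d.val := by
    intro d
    rw [← pow_mul, show (1 : Fˣ) = δ ^ 0 from (pow_zero δ).symm, pow_eq_pow_iff_modEq,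
      horder, Nat.modEq_zero_iff_dvd]
    generalize d.val = m
    rw [← hq21]
    exact Nat.mul_dvd_mul_iff_right (by omega : 0 < q + 1)
  have hdvd : ∀ d : ZMod (q ^ 2 - 1), red q d = 0 ↔ (q - 1) ∣ d.val := by
    intro d
    have h1 : red q d = ((d.val : ℕ) : ZMod (q - 1)) := by
      rw [red, ZMod.castHom_apply, ← ZMod.natCast_val]
    rw [h1, ZMod.natCast_eq_zero_iff]
  -- the bridge
  have hbridge : ∀ a b : ZMod (q ^ 2 - 1),
      (((δ ^ ((Prod.swap (Rmap q δ (a, b))).1).val : Fˣ) : F),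
       ((δ ^ ((Prod.swap (Rmap q δ (a, b))).2).val : Fˣ) : F)) =
      Qpsi T (((δ ^ a.val : Fˣ) : F), ((δ ^ b.val : Fˣ) : F)) := by
    intro a b
    have huan : ((δ ^ a.val : Fˣ) : F) ≠ 0 := Units.ne_zero _
    have hubn : ((δ ^ b.val : Fˣ) : F) ≠ 0 := Units.ne_zero _
    by_cases hc : red q a = red q b
    · -- trivial branch
      have hR : Rmap q δ (a, b) = (a, b) := by simp [Rmap, hc]
      rw [hR]
      have hd0 : red q (b - a) = 0 := by rw [map_sub, hc, sub_self]
      have hE1 : (δ ^ (b - a).val : Fˣ) ^ (q + 1) = 1 := (hpow _).mpr ((hdvd _).mp hd0)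
      rw [hEsub b a] at hE1
      have hE2 : (δ ^ b.val : Fˣ) ^ (q + 1) = (δ ^ a.val : Fˣ) ^ (q + 1) := by
        rw [mul_pow, inv_pow] at hE1
        exact mul_inv_eq_one.mp hE1
      have hnorm : ((δ ^ a.val : Fˣ) : F) ^ (q + 1) = ((δ ^ b.val : Fˣ) : F) ^ (q + 1) := by
        have h3 := congrArg Units.val hE2
        simp only [Units.val_pow_eq_pow_val] at h3
        exact h3.symm
      have hnorm' : ((δ ^ b.val : Fˣ) : F) * T ((δ ^ b.val : Fˣ) : F) =
          ((δ ^ a.val : Fˣ) : F) * T ((δ ^ a.val : Fˣ) : F) := by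
        rw [hTdef, hTdef, ← pow_succ', ← pow_succ']
        exact hnorm.symm
      simp only [Qpsi, Prod.swap_prod_mk]
      by_cases hs0 : ((δ ^ a.val : Fˣ) : F) + ((δ ^ b.val : Fˣ) : F) = 0
      · rw [hs0, psi_zero_left, psi_zero_left, Prod.mk.injEq]
        refine ⟨?_, ?_⟩
        · show ((δ ^ b.val : Fˣ) : F) = -((δ ^ a.val : Fˣ) : F)
          linear_combination hs0
        · show ((δ ^ a.val : Fˣ) : F) = -((δ ^ b.val : Fˣ) : F)
          linear_combination hs0
      · rw [psi_of_ne T hs0, psi_of_ne T hs0, Prod.mk.injEq]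
        have hTs0 : T (((δ ^ a.val : Fˣ) : F) + ((δ ^ b.val : Fˣ) : F)) ≠ 0 :=
          T_ne_zero T hs0
        refine ⟨?_, ?_⟩
        · show ((δ ^ b.val : Fˣ) : F) = _
          rw [eq_div_iff hTs0, map_add]
          linear_combination hnorm'
        · show ((δ ^ a.val : Fˣ) : F) = _
          rw [eq_div_iff hTs0, map_add]
          linear_combination - hnorm'
    · -- interesting branch
      have hR : Rmap q δ (a, b) = (kij q δ a b, lij q δ a b) := by simp [Rmap, hc]
      rw [hR]
      have hxne : (1 : F) + ((δ ^ (b - a).val : Fˣ) : F) ≠ 0 := by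
        intro h0
        have hEm1 : ((δ ^ (b - a).val : Fˣ) : F) = -1 := by linear_combination h0
        have hm1 : ((-1 : F)) ^ (q + 1) = 1 := by
          rcases Nat.even_or_odd q with hev | hod
          · have hp2 : (2 : ℕ) = p := by
              have hd2 : (2 : ℕ) ∣ p ^ k := by rw [hpk]; exact hev.two_dvd
              exact (Nat.prime_dvd_prime_iff_eq Nat.prime_two hp.nat_prime).mp
                (Nat.Prime.dvd_of_dvd_pow Nat.prime_two hd2)
            haveI : CharP F 2 := hp2 ▸ hcharP
            rw [show (-1 : F) = 1 from CharTwo.neg_eq 1, one_pow]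
          · exact Even.neg_one_pow hod.add_one
        have hE1 : (δ ^ (b - a).val : Fˣ) ^ (q + 1) = 1 := by
          have hval : ((δ ^ (b - a).val : Fˣ) : F) ^ (q + 1) = 1 := by rw [hEm1, hm1]
          refine Units.ext ?_
          rw [Units.val_pow_eq_pow_val, Units.val_one]
          exact hval
        have h5 := (hdvd _).mpr ((hpow _).mp hE1)
        rw [map_sub, sub_eq_zero] at h5
        exact hc h5.symm
      have hex : ∃ x : ZMod (q ^ 2 - 1),
          ((δ ^ x.val : Fˣ) : F) = 1 + ((δ ^ (b - a).val : Fˣ) : F) := by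
        obtain ⟨c, hcval⟩ := isUnit_iff_ne_zero.mpr hxne
        obtain ⟨x, hx⟩ := hEbij.surjective c
        exact ⟨x, by rw [show (δ ^ x.val : Fˣ) = c from hx, hcval]⟩
      have hx : ((δ ^ (xij q δ a b).val : Fˣ) : F) =
          1 + ((δ ^ (b - a).val : Fˣ) : F) := by
        unfold xij
        exact Classical.epsilon_spec hex
      have hXn : ((δ ^ (xij q δ a b).val : Fˣ) : F) ≠ 0 := Units.ne_zero _
      have hEbaF : ((δ ^ (b - a).val : Fˣ) : F) =
          ((δ ^ b.val : Fˣ) : F) * ((δ ^ a.val : Fˣ) : F)⁻¹ := by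
        rw [hEsub b a, Units.val_mul, Units.val_inv_eq_inv_val]
      have hs : ((δ ^ a.val : Fˣ) : F) + ((δ ^ b.val : Fˣ) : F) =
          ((δ ^ a.val : Fˣ) : F) * ((δ ^ (xij q δ a b).val : Fˣ) : F) := by
        rw [hx, hEbaF]
        field_simp
      have hsne : ((δ ^ a.val : Fˣ) : F) + ((δ ^ b.val : Fˣ) : F) ≠ 0 := by
        rw [hs]; exact mul_ne_zero huan hXn
      have hq1s : q - 1 + 1 = q := by omega
      simp only [Qpsi, Prod.swap_prod_mk]
      rw [Prod.mk.injEq]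
      refine ⟨?_, ?_⟩
      · -- first component : lij
        have hlij : (δ ^ (lij q δ a b).val : Fˣ) =
            δ ^ a.val * ((δ ^ (xij q δ a b).val) ^ (q - 1))⁻¹ := by
          unfold lij
          rw [hEsub a _, hE_mul]
        have hXp : (((δ ^ (xij q δ a b).val) ^ (q - 1) : Fˣ) : F) =
            ((δ ^ (xij q δ a b).val : Fˣ) : F) ^ (q - 1) := Units.val_pow_eq_pow_val _ _
        rw [hlij, Units.val_mul, Units.val_inv_eq_inv_val, hXp]
        rw [psi_of_ne T hsne, hs, map_mul]
        have hTX : T ((δ ^ (xij q δ a b).val : Fˣ) : F) =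
            ((δ ^ (xij q δ a b).val : Fˣ) : F) ^ (q - 1) *
              ((δ ^ (xij q δ a b).val : Fˣ) : F) := by
          rw [hTdef, ← pow_succ, hq1s]
        rw [hTX]
        have hTan : T ((δ ^ a.val : Fˣ) : F) ≠ 0 := T_ne_zero T huan
        have hXpn : ((δ ^ (xij q δ a b).val : Fˣ) : F) ^ (q - 1) ≠ 0 := pow_ne_zero _ hXn
        field_simp
      · -- second component : kij
        have hyij : (δ ^ (yij q δ a b).val : Fˣ) =
            δ ^ (xij q δ a b).val * δ ^ a.val * (δ ^ b.val)⁻¹ := by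
          unfold yij
          rw [hEsub _ b, hE_add]
        have hkij : (δ ^ (kij q δ a b).val : Fˣ) =
            δ ^ b.val *
              ((δ ^ (xij q δ a b).val * δ ^ a.val * (δ ^ b.val)⁻¹) ^ (q - 1))⁻¹ := by
          unfold kij
          rw [hEsub b _, hE_mul, hyij]
        have hYF : ((δ ^ (xij q δ a b).val * δ ^ a.val * (δ ^ b.val)⁻¹ : Fˣ) : F) =
            ((δ ^ (xij q δ a b).val : Fˣ) : F) * ((δ ^ a.val : Fˣ) : F) *
              ((δ ^ b.val : Fˣ) : F)⁻¹ := by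
          rw [Units.val_mul, Units.val_mul, Units.val_inv_eq_inv_val]
        have hYn : ((δ ^ (xij q δ a b).val : Fˣ) : F) * ((δ ^ a.val : Fˣ) : F) *
            ((δ ^ b.val : Fˣ) : F)⁻¹ ≠ 0 := by
          rw [← hYF]; exact Units.ne_zero _
        have hsv : ((δ ^ a.val : Fˣ) : F) + ((δ ^ b.val : Fˣ) : F) =
            ((δ ^ b.val : Fˣ) : F) *
              (((δ ^ (xij q δ a b).val : Fˣ) : F) * ((δ ^ a.val : Fˣ) : F) *
                ((δ ^ b.val : Fˣ) : F)⁻¹) := by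
          rw [hs]
          field_simp
        have hYp : (((δ ^ (xij q δ a b).val * δ ^ a.val * (δ ^ b.val)⁻¹) ^ (q - 1) : Fˣ) : F) =
            ((δ ^ (xij q δ a b).val * δ ^ a.val * (δ ^ b.val)⁻¹ : Fˣ) : F) ^ (q - 1) :=
          Units.val_pow_eq_pow_val _ _
        rw [hkij, Units.val_mul, Units.val_inv_eq_inv_val, hYp, hYF]
        rw [psi_of_ne T hsne, hsv, map_mul]
        have hTY : T (((δ ^ (xij q δ a b).val : Fˣ) : F) * ((δ ^ a.val : Fˣ) : F) *
              ((δ ^ b.val : Fˣ) : F)⁻¹) =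
            (((δ ^ (xij q δ a b).val : Fˣ) : F) * ((δ ^ a.val : Fˣ) : F) *
                ((δ ^ b.val : Fˣ) : F)⁻¹) ^ (q - 1) *
              (((δ ^ (xij q δ a b).val : Fˣ) : F) * ((δ ^ a.val : Fˣ) : F) *
                ((δ ^ b.val : Fˣ) : F)⁻¹) := by
          rw [hTdef, ← pow_succ, hq1s]
        rw [hTY]
        have hTbn : T ((δ ^ b.val : Fˣ) : F) ≠ 0 := T_ne_zero T hubn
        have hYpn : (((δ ^ (xij q δ a b).val : Fˣ) : F) * ((δ ^ a.val : Fˣ) : F) *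
            ((δ ^ b.val : Fˣ) : F)⁻¹) ^ (q - 1) ≠ 0 := pow_ne_zero _ hYn
        field_simp
  -- injectivity and assembly
  have heFinj : Function.Injective (fun i : ZMod (q ^ 2 - 1) => ((δ ^ i.val : Fˣ) : F)) :=
    fun i j h => hEinj (Units.ext h)
  have hm3inj : ∀ y z : ZMod (q ^ 2 - 1) × ZMod (q ^ 2 - 1) × ZMod (q ^ 2 - 1),
      (((δ ^ y.1.val : Fˣ) : F), ((δ ^ y.2.1.val : Fˣ) : F), ((δ ^ y.2.2.val : Fˣ) : F)) =
      (((δ ^ z.1.val : Fˣ) : F), ((δ ^ z.2.1.val : Fˣ) : F), ((δ ^ z.2.2.val : Fˣ) : F)) →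
      y = z := by
    rintro ⟨y1, y2, y3⟩ ⟨z1, z2, z3⟩ h
    rw [Prod.mk.injEq, Prod.mk.injEq] at h
    exact Prod.ext (heFinj h.1) (Prod.ext (heFinj h.2.1) (heFinj h.2.2))
  have hcomm12 : ∀ y : ZMod (q ^ 2 - 1) × ZMod (q ^ 2 - 1) × ZMod (q ^ 2 - 1),
      (((δ ^ (act12 (Prod.swap ∘ Rmap q δ) y).1.val : Fˣ) : F),
       ((δ ^ (act12 (Prod.swap ∘ Rmap q δ) y).2.1.val : Fˣ) : F),
       ((δ ^ (act12 (Prod.swap ∘ Rmap q δ) y).2.2.val : Fˣ) : F)) =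
      act12 (Qpsi T)
        (((δ ^ y.1.val : Fˣ) : F), ((δ ^ y.2.1.val : Fˣ) : F), ((δ ^ y.2.2.val : Fˣ) : F)) := by
    rintro ⟨y1, y2, y3⟩
    simp only [act12, Function.comp_apply]
    have h := hbridge y1 y2
    rw [← h]
  have hcomm13 : ∀ y : ZMod (q ^ 2 - 1) × ZMod (q ^ 2 - 1) × ZMod (q ^ 2 - 1),
      (((δ ^ (act13 (Prod.swap ∘ Rmap q δ) y).1.val : Fˣ) : F),
       ((δ ^ (act13 (Prod.swap ∘ Rmap q δ) y).2.1.val : Fˣ) : F),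
       ((δ ^ (act13 (Prod.swap ∘ Rmap q δ) y).2.2.val : Fˣ) : F)) =
      act13 (Qpsi T)
        (((δ ^ y.1.val : Fˣ) : F), ((δ ^ y.2.1.val : Fˣ) : F), ((δ ^ y.2.2.val : Fˣ) : F)) := by
    rintro ⟨y1, y2, y3⟩
    simp only [act13, Function.comp_apply]
    have h := hbridge y1 y3
    rw [← h]
  have hcomm23 : ∀ y : ZMod (q ^ 2 - 1) × ZMod (q ^ 2 - 1) × ZMod (q ^ 2 - 1),
      (((δ ^ (act23 (Prod.swap ∘ Rmap q δ) y).1.val : Fˣ) : F),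
       ((δ ^ (act23 (Prod.swap ∘ Rmap q δ) y).2.1.val : Fˣ) : F),
       ((δ ^ (act23 (Prod.swap ∘ Rmap q δ) y).2.2.val : Fˣ) : F)) =
      act23 (Qpsi T)
        (((δ ^ y.1.val : Fˣ) : F), ((δ ^ y.2.1.val : Fˣ) : F), ((δ ^ y.2.2.val : Fˣ) : F)) := by
    rintro ⟨y1, y2, y3⟩
    simp only [act23, Function.comp_apply]
    have h := hbridge y2 y3
    rw [← h]
  funext x
  simp only [Function.comp_apply]
  apply hm3inj
  rw [hcomm12, hcomm13, hcomm23, hcomm23, hcomm13, hcomm12]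
  exact ybe_psi T hT _
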